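/- Let δ > 0, α ∈ ℝ, b ≥ 2 and let τ_n = Σ_{j=1}^n E_j/((b-1)(j-1)+1) with (E_j) i.i.d. Exp(1). If log(δ^α) < 1 then E[(δ^α)^{τ_n}] = Π_{j=1}^n ((b-1)(j-1)+1)/((b-1)(j-1)+1 - log δ^α), and consequently E[(δ^α)^{τ_n}] ~ (Γ((log(1/δ)^α + 1)/(b-1))/Γ(1/(b-1))) · n^{-log(1/δ)^α/(b-1)} as n → ∞. -/

import Mathlib

open MeasureTheory ProbabilityTheory Filter Finset

section Aux

open Real

lemma iIndepFun_ae_congr {ι Ω : Type*} [MeasurableSpace Ω] {μ : Measure Ω}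
    {β : ι → Type*} [Countable ι] {m : ∀ i, MeasurableSpace (β i)} {f g : ∀ i, Ω → β i}
    (hf : iIndepFun (m := m) f μ) (h : ∀ i, f i =ᵐ[μ] g i) : iIndepFun (m := m) g μ := by
  rw [iIndepFun_iff_measure_inter_preimage_eq_mul] at hf ⊢
  intro S sets hsets
  have hpre : ∀ i : ι, (f i ⁻¹' sets i : Set Ω) =ᵐ[μ] (g i ⁻¹' sets i) :=
    fun i => (h i).fun_comp (sets i)
  have h1 : (⋂ i ∈ S, f i ⁻¹' sets i : Set Ω) =ᵐ[μ] (⋂ i ∈ S, g i ⁻¹' sets i) :=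
    EventuallyEq.countable_bInter (S.countable_toSet) (fun i _ => hpre i)
  rw [← measure_congr h1, hf S hsets]
  exact Finset.prod_congr rfl fun i _ => measure_congr (hpre i)

lemma expMeasure_one_eq :
    expMeasure 1 = MeasureTheory.volume.withDensity
      (fun x => ((exponentialPDFReal 1 x).toNNReal : ENNReal)) := rfl

lemma exponentialPDFReal_one (x : ℝ) :
    exponentialPDFReal 1 x = if 0 ≤ x then Real.exp (-x) else 0 := by
  unfold exponentialPDFReal gammaPDFReal
  simp [Real.Gamma_one]

lemma pdf_mul_eq_indicator (s : ℝ) :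
    (fun x => exponentialPDFReal 1 x * Real.exp (s * x)) =
      Set.indicator (Set.Ici (0:ℝ)) (fun x => Real.exp (-(1 - s) * x)) := by
  funext x
  rw [exponentialPDFReal_one]
  by_cases hx : 0 ≤ x
  · rw [if_pos hx, Set.indicator_of_mem (Set.mem_Ici.mpr hx), ← Real.exp_add]
    ring_nf
  · rw [if_neg hx, Set.indicator_of_notMem (by simpa using hx), zero_mul]

lemma integrable_exp_mul_expMeasure {s : ℝ} (hs : s < 1) :
    Integrable (fun x => Real.exp (s * x)) (expMeasure 1) := by
  rw [expMeasure_one_eq,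
    integrable_withDensity_iff_integrable_smul
      ((measurable_exponentialPDFReal 1).real_toNNReal)]
  have : (fun x => (Real.toNNReal (exponentialPDFReal 1 x)) • Real.exp (s * x)) =
      Set.indicator (Set.Ici (0:ℝ)) (fun x => Real.exp (-(1 - s) * x)) := by
    rw [← pdf_mul_eq_indicator s]
    funext x
    rw [NNReal.smul_def, Real.coe_toNNReal _ (exponentialPDFReal_nonneg one_pos x), smul_eq_mul]
  rw [this, integrable_indicator_iff measurableSet_Ici,
    integrableOn_Ici_iff_integrableOn_Ioi]
  exact exp_neg_integrableOn_Ioi 0 (by linarith)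

lemma integral_exp_mul_expMeasure {s : ℝ} (hs : s < 1) :
    ∫ x, Real.exp (s * x) ∂(expMeasure 1) = (1 - s)⁻¹ := by
  have h1s : (0:ℝ) < 1 - s := by linarith
  rw [expMeasure_one_eq,
    integral_withDensity_eq_integral_smul
      ((measurable_exponentialPDFReal 1).real_toNNReal)]
  have : (fun x => (Real.toNNReal (exponentialPDFReal 1 x)) • Real.exp (s * x)) =
      Set.indicator (Set.Ici (0:ℝ)) (fun x => Real.exp (-(1 - s) * x)) := by
    rw [← pdf_mul_eq_indicator s]
    funext x
    rw [NNReal.smul_def, Real.coe_toNNReal _ (exponentialPDFReal_nonneg one_pos x), smul_eq_mul]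
  rw [this, integral_indicator measurableSet_Ici, integral_Ici_eq_integral_Ioi]
  calc ∫ x in Set.Ioi (0:ℝ), Real.exp (-(1 - s) * x)
      = ∫ x in Set.Ioi (0:ℝ), Real.exp (-((1 - s) * x)) := by
        refine setIntegral_congr_fun measurableSet_Ioi fun x _ => ?_
        ring_nf
    _ = (1 - s)⁻¹ • ∫ x in Set.Ioi ((1 - s) * 0), Real.exp (-x) :=
        integral_comp_mul_left_Ioi (fun y => Real.exp (-y)) 0 h1s
    _ = (1 - s)⁻¹ := by rw [mul_zero, integral_exp_neg_Ioi_zero, smul_eq_mul, mul_one]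

lemma mgf_of_map_expMeasure {Ω : Type*} [MeasurableSpace Ω] {μ : Measure Ω} {X : Ω → ℝ}
    (hX : AEMeasurable X μ) (hmap : Measure.map X μ = expMeasure 1) {s : ℝ} (hs : s < 1) :
    Integrable (fun ω => Real.exp (s * X ω)) μ ∧
      ∫ ω, Real.exp (s * X ω) ∂μ = (1 - s)⁻¹ := by
  have hsm : AEStronglyMeasurable (fun x => Real.exp (s * x)) (Measure.map X μ) :=
    (Real.continuous_exp.comp (continuous_const.mul continuous_id)).aestronglyMeasurable
  constructor
  · have := (integrable_map_measure hsm hX).mp (hmap ▸ integrable_exp_mul_expMeasure hs)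
    exact this
  · rw [← integral_map hX hsm, hmap, integral_exp_mul_expMeasure hs]

end Aux

/-- Exact formula and asymptotics for `E[(δ^α)^{τ_n}]` where
`τ_n = Σ_{j=1}^n E_j/((b-1)(j-1)+1)` with `(E_j)` i.i.d. `Exp(1)`. -/
theorem moment_generating_tau
    {Ω : Type*} [MeasureSpace Ω] [IsProbabilityMeasure (ℙ : Measure Ω)]
    (b : ℕ) (hb : 2 ≤ b) (E : ℕ → Ω → ℝ)
    (hInd : iIndepFun (m := fun _ => Real.measurableSpace) E ℙ)
    (hExp : ∀ j, Measure.map (E j) ℙ = expMeasure 1)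
    (δ α : ℝ) (hδ : 0 < δ) (hlog : Real.log (δ ^ α) < 1) :
    (∀ n : ℕ,
      ∫ ω, (δ ^ α) ^ (∑ j ∈ Finset.Icc 1 n, E j ω / (((b : ℝ) - 1) * (j - 1 : ℕ) + 1)) ∂ℙ
        = ∏ j ∈ Finset.Icc 1 n,
            (((b : ℝ) - 1) * (j - 1 : ℕ) + 1)
              / (((b : ℝ) - 1) * (j - 1 : ℕ) + 1 - Real.log (δ ^ α))) ∧
    Filter.Tendsto
      (fun n : ℕ =>
        (∫ ω, (δ ^ α) ^ (∑ j ∈ Finset.Icc 1 n,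
            E j ω / (((b : ℝ) - 1) * (j - 1 : ℕ) + 1)) ∂ℙ)
          / ((Real.Gamma ((α * Real.log (1 / δ) + 1) / ((b : ℝ) - 1))
                / Real.Gamma (1 / ((b : ℝ) - 1)))
              * (n : ℝ) ^ (-(α * Real.log (1 / δ)) / ((b : ℝ) - 1))))
      atTop (nhds 1) := by
  have hδα : 0 < δ ^ α := Real.rpow_pos_of_pos hδ α
  set c : ℝ := Real.log (δ ^ α) with hc
  have hB : (1:ℝ) ≤ (b:ℝ) - 1 := by
    have : (2:ℝ) ≤ (b:ℝ) := by exact_mod_cast hb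
    linarith
  set a : ℕ → ℝ := fun j => ((b : ℝ) - 1) * ((j - 1 : ℕ) : ℝ) + 1 with ha
  have haj : ∀ j, 1 ≤ a j := by
    intro j
    have h1 : (0:ℝ) ≤ ((b : ℝ) - 1) * ((j - 1 : ℕ) : ℝ) := by positivity
    simp only [ha]; linarith
  haveI hprob : IsProbabilityMeasure (expMeasure (1:ℝ)) := isProbabilityMeasure_expMeasure one_pos
  have hAE : ∀ j, AEMeasurable (E j) ℙ := by
    intro j
    by_contra h
    have h0 := Measure.map_of_not_aemeasurable h
    rw [hExp j] at h0
    exact IsProbabilityMeasure.ne_zero (expMeasure 1) h0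
  set E' : ℕ → Ω → ℝ := fun j => (hAE j).mk (E j) with hE'
  have hmeas' : ∀ j, Measurable (E' j) := fun j => (hAE j).measurable_mk
  have heq : ∀ j, E j =ᵐ[ℙ] E' j := fun j => (hAE j).ae_eq_mk
  have hInd' : iIndepFun (m := fun _ => Real.measurableSpace) E' ℙ := iIndepFun_ae_congr hInd heq
  have hExp' : ∀ j, Measure.map (E' j) ℙ = expMeasure 1 := fun j => by
    rw [← Measure.map_congr (heq j), hExp j]
  set X : ℕ → Ω → ℝ := fun j ω => (a j)⁻¹ * E' j ω with hX
  have hIndX : iIndepFun (m := fun _ => Real.measurableSpace) X ℙ :=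
    hInd'.comp (fun j x => (a j)⁻¹ * x) (fun j => (measurable_const_mul _))
  have hmeasX : ∀ j, Measurable (X j) := fun j => (hmeas' j).const_mul _
  have hsj : ∀ j, c / a j < 1 := by
    intro j
    have hapos : (0:ℝ) < a j := lt_of_lt_of_le one_pos (haj j)
    exact (div_lt_one hapos).2 (hlog.trans_le (haj j))
  have hmgfX : ∀ j, mgf (X j) ℙ c = a j / (a j - c) := by
    intro j
    have hapos : (0:ℝ) < a j := lt_of_lt_of_le one_pos (haj j)
    have h1 : mgf (X j) ℙ c = ∫ ω, Real.exp ((c / a j) * E' j ω) ∂ℙ := by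
      unfold mgf
      refine integral_congr_ae (Filter.Eventually.of_forall fun ω => ?_)
      simp only [hX]
      rw [div_eq_mul_inv, mul_assoc]
    rw [h1, (mgf_of_map_expMeasure ((hmeas' j).aemeasurable) (hExp' j) (hsj j)).2]
    have hane : a j ≠ 0 := ne_of_gt hapos
    have h2 : 1 - c / a j = (a j - c) / a j := by field_simp
    rw [h2, inv_div]
  have key : ∀ n : ℕ,
      ∫ ω, (δ ^ α) ^ (∑ j ∈ Finset.Icc 1 n, E j ω / (((b : ℝ) - 1) * (j - 1 : ℕ) + 1)) ∂ℙ
        = ∏ j ∈ Finset.Icc 1 n, a j / (a j - c) := by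
    intro n
    have step1 : ∫ ω, (δ ^ α) ^ (∑ j ∈ Finset.Icc 1 n, E j ω / (((b : ℝ) - 1) * (j - 1 : ℕ) + 1)) ∂ℙ
        = mgf (∑ j ∈ Finset.Icc 1 n, X j) ℙ c := by
      unfold mgf
      refine integral_congr_ae ?_
      filter_upwards [MeasureTheory.ae_all_iff.2 heq] with ω hω
      rw [Real.rpow_def_of_pos hδα]
      congr 1
      rw [Finset.sum_apply]
      congr 1
      refine Finset.sum_congr rfl fun j _ => ?_
      rw [hω j]
      simp only [hX, ha]
      rw [div_eq_mul_inv, mul_comm]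
    rw [step1, hIndX.mgf_sum hmeasX]
    exact Finset.prod_congr rfl fun j _ => hmgfX j
  refine ⟨key, ?_⟩
  set B : ℝ := (b : ℝ) - 1 with hBdef
  have hBpos : (0:ℝ) < B := lt_of_lt_of_le one_pos hB
  have hBne : B ≠ 0 := ne_of_gt hBpos
  set x : ℝ := 1 / B with hxdef
  set y : ℝ := (1 - c) / B with hydef
  have hxpos : 0 < x := by rw [hxdef]; positivity
  have hypos : 0 < y := div_pos (by linarith) hBpos
  have hΓx : 0 < Real.Gamma x := Real.Gamma_pos_of_pos hxpos
  have hΓy : 0 < Real.Gamma y := Real.Gamma_pos_of_pos hypos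
  have hαδ : α * Real.log (1 / δ) = -c := by
    rw [one_div, Real.log_inv, hc, Real.log_rpow hδ]
    ring
  have hxy : x - y = c / B := by
    rw [hxdef, hydef]
    field_simp
    ring
  -- rewrite the product over `Icc 1 n` as a ratio of Pochhammer-type products
  have hP : ∀ n : ℕ, (∏ j ∈ Finset.Icc 1 n, a j / (a j - c))
      = (∏ k ∈ Finset.range n, (x + k)) / (∏ k ∈ Finset.range n, (y + k)) := by
    intro n
    rw [← Finset.Ico_add_one_right_eq_Icc, Finset.prod_Ico_eq_prod_range, ← Finset.prod_div_distrib,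
      Nat.add_sub_cancel]
    refine Finset.prod_congr rfl fun k _ => ?_
    have hk : ((1 + k - 1 : ℕ) : ℝ) = (k : ℝ) := by
      rw [Nat.add_sub_cancel_left]
    have h1 : a (1 + k) = B * (x + k) := by
      simp only [ha, hk, hxdef]
      field_simp
      ring
    have h2 : a (1 + k) - c = B * (y + k) := by
      simp only [ha, hk, hydef]
      field_simp
      ring
    rw [h2, h1, mul_div_mul_left _ _ hBne]
  -- positivity of GammaSeq for positive argument and positive n
  have hGpos : ∀ (s : ℝ), 0 < s → ∀ n : ℕ, 0 < (n:ℝ) → 0 < Real.GammaSeq s n := by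
    intro s hs n hn
    rw [Real.GammaSeq]
    have h1 : 0 < ∏ j ∈ Finset.range (n+1), (s + (j:ℝ)) :=
      Finset.prod_pos fun j _ => by positivity
    have h2 : (0:ℝ) < (n:ℝ) ^ s := Real.rpow_pos_of_pos hn s
    have h3 : (0:ℝ) < (n.factorial : ℝ) := by exact_mod_cast n.factorial_pos
    positivity
  -- express the partial products via GammaSeq
  have hPx : ∀ n : ℕ, (0:ℝ) < n → ∀ s : ℝ, 0 < s →
      ∏ k ∈ Finset.range n, (s + k)
        = (n:ℝ) ^ s * (n.factorial : ℝ) / (Real.GammaSeq s n * (s + n)) := by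
    intro n hn s hs
    have h1 : Real.GammaSeq s n
        = (n:ℝ) ^ s * (n.factorial : ℝ) / ((∏ k ∈ Finset.range n, (s + k)) * (s + n)) := by
      rw [Real.GammaSeq, Finset.prod_range_succ]
    have hpr : 0 < ∏ k ∈ Finset.range n, (s + (k:ℝ)) :=
      Finset.prod_pos fun k _ => by positivity
    have hsn : (0:ℝ) < s + n := by positivity
    have h2 : (0:ℝ) < (n:ℝ) ^ s := Real.rpow_pos_of_pos hn s
    have h3 : (0:ℝ) < (n.factorial : ℝ) := by exact_mod_cast n.factorial_pos
    rw [h1]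
    field_simp
  -- the key algebraic identity for n ≥ 1
  have hmain : ∀ n : ℕ, 1 ≤ n →
      ((∏ k ∈ Finset.range n, (x + k)) / (∏ k ∈ Finset.range n, (y + k)))
        / (Real.Gamma y / Real.Gamma x * (n:ℝ) ^ (x - y))
      = (Real.GammaSeq y n / Real.Gamma y) * (Real.Gamma x / Real.GammaSeq x n)
          * ((y + n) / (x + n)) := by
    intro n hn
    have hnpos : (0:ℝ) < n := by exact_mod_cast hn
    have hGx := hGpos x hxpos n hnpos
    have hGy := hGpos y hypos n hnpos
    have hnx : (0:ℝ) < (n:ℝ) ^ x := Real.rpow_pos_of_pos hnpos x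
    have hny : (0:ℝ) < (n:ℝ) ^ y := Real.rpow_pos_of_pos hnpos y
    have hf : (0:ℝ) < (n.factorial : ℝ) := by exact_mod_cast n.factorial_pos
    have hxn : (0:ℝ) < x + n := by positivity
    have hyn : (0:ℝ) < y + n := by positivity
    rw [hPx n hnpos x hxpos, hPx n hnpos y hypos, Real.rpow_sub hnpos]
    field_simp
  -- the limit of the right-hand side
  have hlim : Tendsto (fun n : ℕ =>
      (Real.GammaSeq y n / Real.Gamma y) * (Real.Gamma x / Real.GammaSeq x n)
        * ((y + n) / (x + n))) atTop (nhds 1) := by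
    have t1 : Tendsto (fun n : ℕ => Real.GammaSeq y n / Real.Gamma y) atTop (nhds 1) := by
      have h := (Real.GammaSeq_tendsto_Gamma y).div_const (Real.Gamma y)
      rwa [div_self hΓy.ne'] at h
    have t2 : Tendsto (fun n : ℕ => Real.Gamma x / Real.GammaSeq x n) atTop (nhds 1) := by
      have h := Filter.Tendsto.div
        (tendsto_const_nhds : Tendsto (fun _ : ℕ => Real.Gamma x) atTop (nhds (Real.Gamma x)))
        (Real.GammaSeq_tendsto_Gamma x) hΓx.ne'
      rwa [div_self hΓx.ne'] at h
    have t3 : Tendsto (fun n : ℕ => (y + (n:ℝ)) / (x + n)) atTop (nhds 1) := by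
      have h4 : Tendsto (fun t : ℝ => (y + t) / (x + t)) atTop (nhds 1) := by
        have h5 : Tendsto (fun t : ℝ => 1 + (y - x) / (x + t)) atTop (nhds (1 + 0)) :=
          tendsto_const_nhds.add (Filter.Tendsto.div_atTop tendsto_const_nhds
            (tendsto_atTop_add_const_left _ x tendsto_id))
        rw [add_zero] at h5
        refine h5.congr' ?_
        filter_upwards [Filter.eventually_gt_atTop (-x)] with t ht
        have hxt : x + t ≠ 0 := by linarith
        field_simp
        ring
      exact h4.comp tendsto_natCast_atTop_atTop
    have := (t1.mul t2).mul t3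
    simpa using this
  refine hlim.congr' ?_
  filter_upwards [Filter.eventually_ge_atTop 1] with n hn
  have e1 : (-c + 1) / B = y := by rw [hydef]; ring_nf
  have e2 : -(-c) / B = x - y := by rw [hxy]; ring_nf
  rw [key n, hP n, hαδ, e1, e2]
  exact (hmain n hn).symm
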